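/- Let A be a real M×N matrix such that AA* is invertible. Suppose y = Ax + e where x ∈ ℝ^N is s-sparse and e ∈ ℝ^M, and let λ > 0. Define the NST+HT+subOptFB iterates by: μ^0 = 0 and, for k ≥ 1: x^k = μ^{k−1} + A*(AA*)⁻¹(y − Aμ^{k−1}); T_k an index set of s largest absolute entries of x^k; and μ^k the vector supported on T_k given by μ^k = (x^k)_{T_k} + λ⁻¹·[A*(y − A(x^k)_{T_k})]_{T_k}. Suppose δ_{3s}(A) < 1, γ_{3s}(A) < √2/4, and λ > 2√2·γ_{3s}(A)·(1+δ_{3s}(A))·√(1+δ_{3s}(A)) / (√(1−δ_{3s}(A))·(1−2√2·γ_{3s}(A))). Set ρ = 2√2·γ_{3s}(A)·(1 + (1+δ_{3s}(A))√(1+δ_{3s}(A))/(λ√(1−δ_{3s}(A)))) and κ = (1 + (1+δ_{3s}(A))√(1+δ_{3s}(A))/(λ√(1−δ_{3s}(A))))·(√(2+2θ_{3s}(A)) + √(1+θ_{3s}(A))) + (1+δ_{3s}(A))/(λ√(1−δ_{3s}(A))). Then for every k ≥ 1: ‖x − μ^k‖₂ ≤ ρ^k·‖x − μ^0‖₂ +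 κ·(1−ρ^k)/(1−ρ)·‖e‖₂. -/

import Mathlib

open Matrix

/-- The Euclidean (ℓ²) norm of a vector in ℝⁿ. -/
noncomputable def norm2 {n : ℕ} (x : Fin n → ℝ) : ℝ := Real.sqrt (∑ i, x i ^ 2)

/-- `x` is `s`-sparse: it has at most `s` nonzero entries. -/
def sparse {n : ℕ} (s : ℕ) (x : Fin n → ℝ) : Prop :=
  (Finset.univ.filter fun i => x i ≠ 0).card ≤ s

/-- `restrict T x` is the vector agreeing with `x` on `T` and zero outside `T`. -/
def restrict {n : ℕ} (T : Finset (Fin n)) (x : Fin n → ℝ) : Fin n → ℝ :=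
  fun i => if i ∈ T then x i else 0

/-- The positive semidefinite square root of a positive semidefinite matrix, as
`Matrix.PosSemidef.sqrt` was defined in the older Mathlib (removed since). -/
noncomputable def posSemidefSqrt {n : ℕ} {B : Matrix (Fin n) (Fin n) ℝ} (hB : B.PosSemidef) :
    Matrix (Fin n) (Fin n) ℝ :=
  (hB.1.eigenvectorUnitary : Matrix (Fin n) (Fin n) ℝ) *
    diagonal ((↑) ∘ (√·) ∘ hB.1.eigenvalues) *
    (star hB.1.eigenvectorUnitary : Matrix (Fin n) (Fin n) ℝ)

/-- The preconditioned matrix `(AAᴴ)^{-1/2} A`, where `(AAᴴ)^{-1/2}` is the inverse of the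
positive semidefinite square root of `AAᴴ`. -/
noncomputable def precond {M N : ℕ} (A : Matrix (Fin M) (Fin N) ℝ) :
    Matrix (Fin M) (Fin N) ℝ :=
  (posSemidefSqrt (Matrix.posSemidef_self_mul_conjTranspose A))⁻¹ * A

/-- The preconditioned restricted isometry constant `γ_s(A)`: the smallest `γ ≥ 0` such that
`(1-γ)‖x‖₂² ≤ ‖(AAᴴ)^{-1/2}Ax‖₂²` for all `s`-sparse `x`. -/
noncomputable def pripConst {M N : ℕ} (A : Matrix (Fin M) (Fin N) ℝ) (s : ℕ) : ℝ :=
  sInf {γ : ℝ | 0 ≤ γ ∧ ∀ x : Fin N → ℝ, sparse s x →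
    (1 - γ) * norm2 x ^ 2 ≤ norm2 ((precond A).mulVec x) ^ 2}

/-- The restricted isometry constant `δ_s(B)`: the smallest `δ ≥ 0` such that
`(1-δ)‖x‖₂² ≤ ‖Bx‖₂² ≤ (1+δ)‖x‖₂²` for all `s`-sparse `x`. -/
noncomputable def ripConst {m n : ℕ} (B : Matrix (Fin m) (Fin n) ℝ) (s : ℕ) : ℝ :=
  sInf {δ : ℝ | 0 ≤ δ ∧ ∀ x : Fin n → ℝ, sparse s x →
    (1 - δ) * norm2 x ^ 2 ≤ norm2 (B.mulVec x) ^ 2 ∧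
      norm2 (B.mulVec x) ^ 2 ≤ (1 + δ) * norm2 x ^ 2}

/-- `θ_t(A) = δ_t((AAᴴ)⁻¹A)`. -/
noncomputable def thetaConst {M N : ℕ} (A : Matrix (Fin M) (Fin N) ℝ) (t : ℕ) : ℝ :=
  ripConst ((A * Aᴴ)⁻¹ * A) t

namespace NSTaux

variable {n m : ℕ}

lemma sqsum_nonneg (x : Fin n → ℝ) : 0 ≤ ∑ i, x i ^ 2 :=
  Finset.sum_nonneg fun _ _ => sq_nonneg _

lemma norm2_nonneg (x : Fin n → ℝ) : 0 ≤ norm2 x := Real.sqrt_nonneg _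

lemma norm2_sq (x : Fin n → ℝ) : norm2 x ^ 2 = ∑ i, x i ^ 2 :=
  Real.sq_sqrt (sqsum_nonneg x)

lemma norm2_sq_dot (x : Fin n → ℝ) : norm2 x ^ 2 = x ⬝ᵥ x := by
  rw [norm2_sq]; exact Finset.sum_congr rfl fun i _ => sq (x i)

lemma dot_le (x y : Fin n → ℝ) : x ⬝ᵥ y ≤ norm2 x * norm2 y := by
  unfold dotProduct norm2
  simpa using Real.sum_mul_le_sqrt_mul_sqrt Finset.univ x y

lemma dot_expand (x y : Fin n → ℝ) :
    ∑ i, (x + y) i ^ 2 = ∑ i, x i ^ 2 + 2 * (x ⬝ᵥ y) + ∑ i, y i ^ 2 := by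
  unfold dotProduct
  rw [Finset.mul_sum, ← Finset.sum_add_distrib, ← Finset.sum_add_distrib]
  exact Finset.sum_congr rfl fun i _ => by simp [Pi.add_apply]; ring

lemma norm2_add_le (x y : Fin n → ℝ) : norm2 (x + y) ≤ norm2 x + norm2 y := by
  have h1 : norm2 (x + y) ^ 2 ≤ (norm2 x + norm2 y) ^ 2 := by
    have hd := dot_le x y
    have e1 := norm2_sq (x + y)
    have e2 := norm2_sq x
    have e3 := norm2_sq y
    have e4 := dot_expand x y
    nlinarith [norm2_nonneg x, norm2_nonneg y]
  have h2 := abs_le_of_sq_le_sq' h1 (add_nonneg (norm2_nonneg x) (norm2_nonneg y))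
  exact (abs_of_nonneg (norm2_nonneg (x + y))) ▸ h2.2

lemma norm2_neg (x : Fin n → ℝ) : norm2 (-x) = norm2 x := by
  unfold norm2; congr 1; exact Finset.sum_congr rfl fun i _ => by simp

lemma norm2_smul (c : ℝ) (x : Fin n → ℝ) : norm2 (c • x) = |c| * norm2 x := by
  unfold norm2
  have : ∑ i, (c • x) i ^ 2 = c ^ 2 * ∑ i, x i ^ 2 := by
    rw [Finset.mul_sum]; exact Finset.sum_congr rfl fun i _ => by simp [mul_pow]
  rw [this, Real.sqrt_mul (sq_nonneg c), Real.sqrt_sq_eq_abs]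

lemma norm2_sub_le (x y : Fin n → ℝ) : norm2 (x - y) ≤ norm2 x + norm2 y := by
  have := norm2_add_le x (-y)
  rw [norm2_neg] at this
  simpa [sub_eq_add_neg] using this

lemma le_of_sq_le_mul {z c : ℝ} (hz : 0 ≤ z) (hc : 0 ≤ c) (h : z ^ 2 ≤ c * z) : z ≤ c := by
  rcases eq_or_lt_of_le hz with h0 | h0
  · exact h0 ▸ hc
  · nlinarith

lemma le_sqrt_mul_of_sq_le {a b c : ℝ} (ha : 0 ≤ a) (hc : 0 ≤ c) (h : a ^ 2 ≤ b * c ^ 2) :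
    a ≤ Real.sqrt b * c := by
  rcases eq_or_lt_of_le hc with h0 | h0
  · have ha0 : a = 0 := by rw [← h0] at h; nlinarith
    simp [ha0, ← h0, Real.sqrt_nonneg]
  · have hb : 0 ≤ b := by
      by_contra hb; push_neg at hb
      nlinarith [sq_nonneg a, mul_pos (mul_pos h0 h0) (neg_pos.2 hb)]
    have : a = Real.sqrt (a ^ 2) := (Real.sqrt_sq ha).symm
    rw [this]
    calc Real.sqrt (a ^ 2) ≤ Real.sqrt (b * c ^ 2) := Real.sqrt_le_sqrt h
      _ = Real.sqrt b * c := by rw [Real.sqrt_mul hb, Real.sqrt_sq hc]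

lemma sparse_mono {s t : ℕ} (h : s ≤ t) {x : Fin n → ℝ} (hx : sparse s x) : sparse t x :=
  le_trans hx h

lemma sparse_restrict (T : Finset (Fin n)) (x : Fin n → ℝ) : sparse T.card (restrict T x) := by
  apply Finset.card_le_card
  intro i hi
  simp only [Finset.mem_filter, restrict] at hi
  by_contra hiT
  simp [hiT] at hi

lemma sparse_add {a b : ℕ} {x y : Fin n → ℝ} (hx : sparse a x) (hy : sparse b y) :
    sparse (a + b) (x + y) := by
  unfold sparse at *
  calc (Finset.univ.filter fun i => (x + y) i ≠ 0).card
      ≤ ((Finset.univ.filter fun i => x i ≠ 0) ∪ (Finset.univ.filter fun i => y i ≠ 0)).card := by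
        apply Finset.card_le_card
        intro i hi
        simp only [Finset.mem_filter, Finset.mem_union, Finset.mem_univ, true_and,
          Pi.add_apply] at *
        by_contra hc
        push_neg at hc
        exact hi (by rw [hc.1, hc.2]; ring)
    _ ≤ _ := le_trans (Finset.card_union_le _ _) (add_le_add hx hy)

lemma sparse_neg {a : ℕ} {x : Fin n → ℝ} (hx : sparse a x) : sparse a (-x) := by
  unfold sparse at *
  convert hx using 2
  ext i
  simp

lemma sparse_sub {a b : ℕ} {x y : Fin n → ℝ} (hx : sparse a x) (hy : sparse b y) :
    sparse (a + b) (x - y) := by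
  rw [sub_eq_add_neg]; exact sparse_add hx (sparse_neg hy)

lemma sparse_smul {a : ℕ} (c : ℝ) {x : Fin n → ℝ} (hx : sparse a x) : sparse a (c • x) := by
  unfold sparse at *
  refine le_trans (Finset.card_le_card ?_) hx
  intro i hi
  simp only [Finset.mem_filter, Finset.mem_univ, true_and, Pi.smul_apply, smul_eq_mul] at *
  intro h0; exact hi (by rw [h0, mul_zero])

lemma restrict_sum_sq (T : Finset (Fin n)) (x : Fin n → ℝ) :
    ∑ i, restrict T x i ^ 2 = ∑ i ∈ T, x i ^ 2 := by
  rw [← Finset.sum_filter_add_sum_filter_not Finset.univ (· ∈ T)]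
  have h1 : ∀ i ∈ Finset.univ.filter (· ∈ T), restrict T x i ^ 2 = x i ^ 2 := by
    intro i hi; simp only [Finset.mem_filter] at hi; simp [restrict, hi.2]
  have h2 : ∀ i ∈ Finset.univ.filter (¬ · ∈ T), restrict T x i ^ 2 = 0 := by
    intro i hi; simp only [Finset.mem_filter] at hi; simp [restrict, hi.2]
  rw [Finset.sum_congr rfl h1, Finset.sum_eq_zero h2, add_zero]
  congr 1
  ext i; simp

lemma norm2_restrict_sq (T : Finset (Fin n)) (x : Fin n → ℝ) :
    norm2 (restrict T x) ^ 2 = ∑ i ∈ T, x i ^ 2 := by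
  rw [norm2_sq]
  exact restrict_sum_sq T x

lemma norm2_restrict_mono {T U : Finset (Fin n)} (h : T ⊆ U) (x : Fin n → ℝ) :
    norm2 (restrict T x) ≤ norm2 (restrict U x) := by
  unfold norm2
  apply Real.sqrt_le_sqrt
  rw [restrict_sum_sq, restrict_sum_sq]
  exact Finset.sum_le_sum_of_subset_of_nonneg h fun i _ _ => sq_nonneg _

lemma restrict_dot (T : Finset (Fin n)) (a b : Fin n → ℝ) :
    restrict T a ⬝ᵥ b = ∑ i ∈ T, a i * b i := by
  unfold dotProduct restrict
  rw [← Finset.sum_filter_add_sum_filter_not Finset.univ (· ∈ T)]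
  have h2 : ∀ i ∈ Finset.univ.filter (¬ · ∈ T), (if i ∈ T then a i else 0) * b i = 0 := by
    intro i hi; simp only [Finset.mem_filter] at hi; simp [hi.2]
  rw [Finset.sum_eq_zero h2, add_zero]
  rw [show Finset.univ.filter (· ∈ T) = T by ext i; simp]
  exact Finset.sum_congr rfl fun i hi => by simp [hi]

lemma restrict_dot_self (T : Finset (Fin n)) (a : Fin n → ℝ) :
    restrict T a ⬝ᵥ a = norm2 (restrict T a) ^ 2 := by
  rw [restrict_dot, norm2_restrict_sq]
  exact Finset.sum_congr rfl fun i _ => (sq (a i)).symm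

lemma restrict_add (T : Finset (Fin n)) (a b : Fin n → ℝ) :
    restrict T (a + b) = restrict T a + restrict T b := by
  funext i; simp only [restrict, Pi.add_apply]; split_ifs <;> simp

lemma restrict_sub (T : Finset (Fin n)) (a b : Fin n → ℝ) :
    restrict T (a - b) = restrict T a - restrict T b := by
  funext i; simp only [restrict, Pi.sub_apply]; split_ifs <;> simp

lemma transpose_mulVec_dot (B : Matrix (Fin m) (Fin n) ℝ) (u : Fin m → ℝ) (v : Fin n → ℝ) :
    (Bᵀ *ᵥ u) ⬝ᵥ v = u ⬝ᵥ (B *ᵥ v) := by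
  rw [dotProduct_comm, dotProduct_mulVec, vecMul_transpose, dotProduct_comm, dotProduct_mulVec]

lemma symm_mulVec_dot (P : Matrix (Fin n) (Fin n) ℝ) (hP : Pᵀ = P) (u v : Fin n → ℝ) :
    (P *ᵥ u) ⬝ᵥ v = u ⬝ᵥ (P *ᵥ v) := by
  conv_lhs => rw [← hP]
  exact transpose_mulVec_dot P u v

lemma norm2_eq_zero {x : Fin n → ℝ} (h : norm2 x = 0) : x = 0 := by
  have h2 : ∑ i, x i ^ 2 = 0 := by
    have e := norm2_sq x; rw [h] at e; simpa using e.symm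
  funext i
  have := (Finset.sum_eq_zero_iff_of_nonneg (fun i _ => sq_nonneg (x i))).1 h2 i (Finset.mem_univ i)
  exact pow_eq_zero_iff (two_ne_zero) |>.1 this


section ripSpec

variable {m n : ℕ}

lemma norm2_mulVec_le (B : Matrix (Fin m) (Fin n) ℝ) (x : Fin n → ℝ) :
    norm2 (B.mulVec x) ^ 2 ≤ (∑ i, ∑ j, B i j ^ 2) * norm2 x ^ 2 := by
  rw [norm2_sq, norm2_sq, Finset.sum_mul]
  apply Finset.sum_le_sum
  intro i _
  have : B.mulVec x i = ∑ j, B i j * x j := rfl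
  rw [this]
  exact Finset.sum_mul_sq_le_sq_mul_sq Finset.univ (fun j => B i j) x

lemma ripConst_nonneg (B : Matrix (Fin m) (Fin n) ℝ) (t : ℕ) : 0 ≤ ripConst B t :=
  Real.sInf_nonneg fun _ hx => hx.1

lemma ripSet_nonempty (B : Matrix (Fin m) (Fin n) ℝ) (t : ℕ) :
    Set.Nonempty {δ : ℝ | 0 ≤ δ ∧ ∀ x : Fin n → ℝ, sparse t x →
      (1 - δ) * norm2 x ^ 2 ≤ norm2 (B.mulVec x) ^ 2 ∧
        norm2 (B.mulVec x) ^ 2 ≤ (1 + δ) * norm2 x ^ 2} := by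
  refine ⟨1 + ∑ i, ∑ j, B i j ^ 2, ?_, ?_⟩
  · positivity
  · intro x _
    have h1 := norm2_mulVec_le B x
    have h2 : (0:ℝ) ≤ norm2 x ^ 2 := sq_nonneg _
    have h3 : (0:ℝ) ≤ norm2 (B.mulVec x) ^ 2 := sq_nonneg _
    have h4 : (0:ℝ) ≤ ∑ i, ∑ j, B i j ^ 2 :=
      Finset.sum_nonneg fun _ _ => Finset.sum_nonneg fun _ _ => sq_nonneg _
    constructor <;> nlinarith

lemma norm2_zero_vec : norm2 (0 : Fin n → ℝ) = 0 := by unfold norm2; simp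

lemma ripConst_spec (B : Matrix (Fin m) (Fin n) ℝ) (t : ℕ) (x : Fin n → ℝ) (hx : sparse t x) :
    (1 - ripConst B t) * norm2 x ^ 2 ≤ norm2 (B.mulVec x) ^ 2 ∧
      norm2 (B.mulVec x) ^ 2 ≤ (1 + ripConst B t) * norm2 x ^ 2 := by
  set c := ripConst B t with hc
  rcases eq_or_lt_of_le (sq_nonneg (norm2 x)) with h0 | h0
  · have hx0 : x = 0 := by
      apply norm2_eq_zero
      have h1 := norm2_nonneg x
      refine le_antisymm ?_ h1
      nlinarith
    subst hx0
    have hBz : B.mulVec 0 = 0 := by simp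
    rw [hBz, norm2_zero_vec, norm2_zero_vec]
    norm_num
  constructor
  · by_contra hcon
    push_neg at hcon
    have hε : 0 < ((1 - c) * norm2 x ^ 2 - norm2 (B.mulVec x) ^ 2) / norm2 x ^ 2 := by
      apply div_pos _ h0; linarith
    obtain ⟨a, haS, halt⟩ := Real.lt_sInf_add_pos (ripSet_nonempty B t) hε
    have h1 := (haS.2 x hx).1
    have halt' : a < c + ((1 - c) * norm2 x ^ 2 - norm2 (B.mulVec x) ^ 2) / norm2 x ^ 2 := halt
    have hkey : ((1 - c) * norm2 x ^ 2 - norm2 (B.mulVec x) ^ 2) / norm2 x ^ 2 * norm2 x ^ 2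
        = (1 - c) * norm2 x ^ 2 - norm2 (B.mulVec x) ^ 2 := by
      exact div_mul_cancel₀ _ (ne_of_gt h0)
    nlinarith
  · by_contra hcon
    push_neg at hcon
    have hε : 0 < (norm2 (B.mulVec x) ^ 2 - (1 + c) * norm2 x ^ 2) / norm2 x ^ 2 := by
      apply div_pos _ h0; linarith
    obtain ⟨a, haS, halt⟩ := Real.lt_sInf_add_pos (ripSet_nonempty B t) hε
    have h1 := (haS.2 x hx).2
    have halt' : a < c + (norm2 (B.mulVec x) ^ 2 - (1 + c) * norm2 x ^ 2) / norm2 x ^ 2 := halt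
    have hkey : (norm2 (B.mulVec x) ^ 2 - (1 + c) * norm2 x ^ 2) / norm2 x ^ 2 * norm2 x ^ 2
        = norm2 (B.mulVec x) ^ 2 - (1 + c) * norm2 x ^ 2 := by
      exact div_mul_cancel₀ _ (ne_of_gt h0)
    nlinarith

variable {M N : ℕ}

lemma pripConst_nonneg (A : Matrix (Fin M) (Fin N) ℝ) (t : ℕ) : 0 ≤ pripConst A t :=
  Real.sInf_nonneg fun _ hx => hx.1

lemma pripSet_nonempty (A : Matrix (Fin M) (Fin N) ℝ) (t : ℕ) :
    Set.Nonempty {γ : ℝ | 0 ≤ γ ∧ ∀ x : Fin N → ℝ, sparse t x →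
      (1 - γ) * norm2 x ^ 2 ≤ norm2 ((precond A).mulVec x) ^ 2} := by
  refine ⟨1, by norm_num, fun x _ => by nlinarith [sq_nonneg (norm2 ((precond A).mulVec x))]⟩

lemma pripConst_spec (A : Matrix (Fin M) (Fin N) ℝ) (t : ℕ) (x : Fin N → ℝ) (hx : sparse t x) :
    (1 - pripConst A t) * norm2 x ^ 2 ≤ norm2 ((precond A).mulVec x) ^ 2 := by
  set c := pripConst A t with hc
  rcases eq_or_lt_of_le (sq_nonneg (norm2 x)) with h0 | h0
  · have hx0 : x = 0 := by
      apply norm2_eq_zero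
      have h1 := norm2_nonneg x
      refine le_antisymm ?_ h1
      nlinarith
    subst hx0
    have hz : (precond A).mulVec 0 = 0 := by simp
    rw [hz, norm2_zero_vec, norm2_zero_vec]
    norm_num
  by_contra hcon
  push_neg at hcon
  have hε : 0 < ((1 - c) * norm2 x ^ 2 - norm2 ((precond A).mulVec x) ^ 2) / norm2 x ^ 2 := by
    apply div_pos _ h0; linarith
  obtain ⟨a, haS, halt⟩ := Real.lt_sInf_add_pos (pripSet_nonempty A t) hε
  have h1 := haS.2 x hx
  have halt' : a < c + ((1 - c) * norm2 x ^ 2 - norm2 ((precond A).mulVec x) ^ 2) / norm2 x ^ 2 :=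
    halt
  have hkey : ((1 - c) * norm2 x ^ 2 - norm2 ((precond A).mulVec x) ^ 2) / norm2 x ^ 2
      * norm2 x ^ 2 = (1 - c) * norm2 x ^ 2 - norm2 ((precond A).mulVec x) ^ 2 := by
    exact div_mul_cancel₀ _ (ne_of_gt h0)
  nlinarith

end ripSpec

section proj

variable {M N : ℕ} (A : Matrix (Fin M) (Fin N) ℝ)

lemma conj_eq : Aᴴ = Aᵀ := Matrix.conjTranspose_eq_transpose_of_trivial A

lemma G_symm : (A * Aᴴ)ᵀ = A * Aᴴ := by
  rw [conj_eq, Matrix.transpose_mul, Matrix.transpose_transpose]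

lemma W_symm : ((A * Aᴴ)⁻¹)ᵀ = (A * Aᴴ)⁻¹ := by
  rw [Matrix.transpose_nonsing_inv, G_symm]

/-- the projection matrix `A*(AA*)⁻¹A` -/
noncomputable def Pm : Matrix (Fin N) (Fin N) ℝ := Aᴴ * (A * Aᴴ)⁻¹ * A

lemma Pm_symm : (Pm A)ᵀ = Pm A := by
  unfold Pm
  rw [Matrix.transpose_mul, Matrix.transpose_mul, W_symm, conj_eq, Matrix.transpose_transpose,
    Matrix.mul_assoc]

lemma Pm_mul_Pm (hA : IsUnit (A * Aᴴ).det) : Pm A * Pm A = Pm A := by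
  unfold Pm
  rw [Matrix.mul_assoc (Aᴴ * (A * Aᴴ)⁻¹) A (Aᴴ * (A * Aᴴ)⁻¹ * A),
    ← Matrix.mul_assoc A (Aᴴ * (A * Aᴴ)⁻¹) A, ← Matrix.mul_assoc A Aᴴ ((A * Aᴴ)⁻¹),
    Matrix.mul_nonsing_inv _ hA, Matrix.one_mul]

lemma Pm_idem (hA : IsUnit (A * Aᴴ).det) (u : Fin N → ℝ) :
    Pm A *ᵥ (Pm A *ᵥ u) = Pm A *ᵥ u := by
  rw [Matrix.mulVec_mulVec, Pm_mul_Pm A hA]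

lemma Q_symm : ((posSemidefSqrt (Matrix.posSemidef_self_mul_conjTranspose A))⁻¹)ᵀ
    = (posSemidefSqrt (Matrix.posSemidef_self_mul_conjTranspose A))⁻¹ := by
  have h2 : (posSemidefSqrt (Matrix.posSemidef_self_mul_conjTranspose A))ᵀ
      = posSemidefSqrt (Matrix.posSemidef_self_mul_conjTranspose A) := by
    rw [← Matrix.conjTranspose_eq_transpose_of_trivial]
    unfold posSemidefSqrt
    rw [Matrix.conjTranspose_mul, Matrix.conjTranspose_mul, Matrix.diagonal_conjTranspose,
      Matrix.star_eq_conjTranspose, Matrix.conjTranspose_conjTranspose,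
      star_trivial, Matrix.mul_assoc]
  rw [Matrix.transpose_nonsing_inv, h2]

lemma Q_mul_Q : (posSemidefSqrt (Matrix.posSemidef_self_mul_conjTranspose A))⁻¹ *
    (posSemidefSqrt (Matrix.posSemidef_self_mul_conjTranspose A))⁻¹ = (A * Aᴴ)⁻¹ := by
  rw [← Matrix.mul_inv_rev]
  congr 1
  set hB := Matrix.posSemidef_self_mul_conjTranspose A
  unfold posSemidefSqrt
  conv_rhs => rw [hB.1.spectral_theorem, Unitary.conjStarAlgAut_apply]
  have hU := Unitary.coe_star_mul_self hB.1.eigenvectorUnitary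
  rw [Matrix.mul_assoc, Matrix.mul_assoc, ← Matrix.mul_assoc (star _ : Matrix (Fin M) (Fin M) ℝ),
    ← Matrix.mul_assoc _ _ (diagonal _), hU, Matrix.one_mul, ← Matrix.mul_assoc (diagonal _),
    Matrix.diagonal_mul_diagonal, ← Matrix.mul_assoc]
  congr 3
  funext i
  simp only [Function.comp_apply]
  exact Real.mul_self_sqrt (hB.eigenvalues_nonneg i)

lemma Pm_dot (a : Fin N → ℝ) :
    (Pm A *ᵥ a) ⬝ᵥ a = norm2 ((precond A).mulVec a) ^ 2 := by
  have h1 : Pm A *ᵥ a = Aᵀ *ᵥ ((A * Aᴴ)⁻¹ *ᵥ (A *ᵥ a)) := by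
    unfold Pm
    simp only [Matrix.mulVec_mulVec]
    rw [conj_eq, Matrix.mul_assoc]
  have h2 : (A * Aᴴ)⁻¹ *ᵥ (A *ᵥ a)
      = (posSemidefSqrt (Matrix.posSemidef_self_mul_conjTranspose A))⁻¹ *ᵥ
        ((posSemidefSqrt (Matrix.posSemidef_self_mul_conjTranspose A))⁻¹ *ᵥ (A *ᵥ a)) := by
    conv_rhs => rw [Matrix.mulVec_mulVec]
    rw [Q_mul_Q]
  have h3 : (precond A).mulVec a
      = (posSemidefSqrt (Matrix.posSemidef_self_mul_conjTranspose A))⁻¹ *ᵥ (A *ᵥ a) := by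
    unfold precond
    rw [← Matrix.mulVec_mulVec]
  rw [h1, transpose_mulVec_dot, h2, h3, norm2_sq_dot,
    symm_mulVec_dot _ (Q_symm A)]

/-- the residual `u - Pu` -/
noncomputable def rv (u : Fin N → ℝ) : Fin N → ℝ := u - Pm A *ᵥ u

lemma rv_dot_proj (hA : IsUnit (A * Aᴴ).det) (a b : Fin N → ℝ) :
    rv A a ⬝ᵥ (Pm A *ᵥ b) = 0 := by
  unfold rv
  rw [sub_dotProduct]
  have h1 : (Pm A *ᵥ a) ⬝ᵥ (Pm A *ᵥ b) = a ⬝ᵥ (Pm A *ᵥ (Pm A *ᵥ b)) :=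
    symm_mulVec_dot (Pm A) (Pm_symm A) a (Pm A *ᵥ b)
  rw [h1, Pm_idem A hA b, sub_self]

lemma rv_dot_eq (hA : IsUnit (A * Aᴴ).det) (a b : Fin N → ℝ) :
    rv A a ⬝ᵥ b = rv A a ⬝ᵥ rv A b := by
  unfold rv
  rw [dotProduct_sub]
  have := rv_dot_proj A hA a b
  unfold rv at this
  rw [this, sub_zero]

lemma rv_sq_le {t : ℕ} (hA : IsUnit (A * Aᴴ).det) {a : Fin N → ℝ} (ha : sparse t a) :
    norm2 (rv A a) ^ 2 ≤ pripConst A t * norm2 a ^ 2 := by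
  have h1 : norm2 (rv A a) ^ 2 = rv A a ⬝ᵥ a := by
    rw [norm2_sq_dot, ← rv_dot_eq A hA a a]
  have h2 : rv A a ⬝ᵥ a = a ⬝ᵥ a - (Pm A *ᵥ a) ⬝ᵥ a := by
    unfold rv; rw [sub_dotProduct]
  have h3 := pripConst_spec A t a ha
  have h4 := Pm_dot A a
  have h5 := norm2_sq_dot a
  rw [h1, h2, h4, ← h5]
  linarith

lemma rv_norm_le {t : ℕ} (hA : IsUnit (A * Aᴴ).det) {a : Fin N → ℝ} (ha : sparse t a) :
    norm2 (rv A a) ≤ Real.sqrt (pripConst A t) * norm2 a :=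
  le_sqrt_mul_of_sq_le (norm2_nonneg _) (norm2_nonneg _)
    (by have := rv_sq_le A hA ha; nlinarith [sq_nonneg (norm2 a)])

/-- key estimate: the restricted residual is bounded by `γ‖u‖`. -/
lemma est_resid {t : ℕ} (hA : IsUnit (A * Aᴴ).det) {u : Fin N → ℝ} (hu : sparse t u)
    (Ω : Finset (Fin N)) (hΩ : Ω.card ≤ t) :
    norm2 (restrict Ω (u - Pm A *ᵥ u)) ≤ pripConst A t * norm2 u := by
  set γ := pripConst A t with hγ
  have hγ0 : 0 ≤ γ := pripConst_nonneg A t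
  set z := restrict Ω (u - Pm A *ᵥ u) with hz
  have hzs : sparse t z := sparse_mono hΩ (sparse_restrict _ _)
  apply le_of_sq_le_mul (norm2_nonneg z) (mul_nonneg hγ0 (norm2_nonneg u))
  have h1 : norm2 z ^ 2 = z ⬝ᵥ (u - Pm A *ᵥ u) := (restrict_dot_self Ω _).symm
  have h2 : z ⬝ᵥ (u - Pm A *ᵥ u) = rv A z ⬝ᵥ u := by
    unfold rv
    rw [dotProduct_sub, sub_dotProduct]
    have : z ⬝ᵥ (Pm A *ᵥ u) = (Pm A *ᵥ z) ⬝ᵥ u := by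
      rw [symm_mulVec_dot (Pm A) (Pm_symm A) z u]
    rw [this]
  have h3 : rv A z ⬝ᵥ u = rv A z ⬝ᵥ rv A u := rv_dot_eq A hA z u
  have h4 : rv A z ⬝ᵥ rv A u ≤ norm2 (rv A z) * norm2 (rv A u) := dot_le _ _
  have h5 := rv_norm_le A hA hzs
  have h6 := rv_norm_le A hA hu
  have h7 : Real.sqrt γ * Real.sqrt γ = γ := Real.mul_self_sqrt hγ0
  calc norm2 z ^ 2 = rv A z ⬝ᵥ rv A u := by rw [h1, h2, h3]
    _ ≤ norm2 (rv A z) * norm2 (rv A u) := h4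
    _ ≤ (Real.sqrt γ * norm2 z) * (Real.sqrt γ * norm2 u) := by
        apply mul_le_mul h5 h6 (norm2_nonneg _)
        exact mul_nonneg (Real.sqrt_nonneg _) (norm2_nonneg _)
    _ = (Real.sqrt γ * Real.sqrt γ) * (norm2 z * norm2 u) := by ring
    _ = γ * norm2 u * norm2 z := by rw [h7]; ring

/-- RIP upper bound in norm form -/
lemma mulVec_rip_bound {m n t : ℕ} (B : Matrix (Fin m) (Fin n) ℝ) {z : Fin n → ℝ}
    (hz : sparse t z) :
    norm2 (B.mulVec z) ≤ Real.sqrt (1 + ripConst B t) * norm2 z :=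
  le_sqrt_mul_of_sq_le (norm2_nonneg _) (norm2_nonneg _) (ripConst_spec B t z hz).2

/-- generic estimate for `‖(Bᵀe)_Ω‖` given an operator bound for `B` on sparse vectors -/
lemma est_T {m n t : ℕ} (B : Matrix (Fin m) (Fin n) ℝ) {C : ℝ} (hC : 0 ≤ C)
    (hB : ∀ z : Fin n → ℝ, sparse t z → norm2 (B.mulVec z) ≤ C * norm2 z)
    (e' : Fin m → ℝ) (Ω : Finset (Fin n)) (hΩ : Ω.card ≤ t) :
    norm2 (restrict Ω (Bᵀ *ᵥ e')) ≤ C * norm2 e' := by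
  set z := restrict Ω (Bᵀ *ᵥ e') with hzdef
  have hzs : sparse t z := sparse_mono hΩ (sparse_restrict _ _)
  apply le_of_sq_le_mul (norm2_nonneg z) (mul_nonneg hC (norm2_nonneg e'))
  have h1 : norm2 z ^ 2 = z ⬝ᵥ (Bᵀ *ᵥ e') := (restrict_dot_self Ω _).symm
  have h2 : z ⬝ᵥ (Bᵀ *ᵥ e') = (B *ᵥ z) ⬝ᵥ e' := by
    rw [dotProduct_comm, transpose_mulVec_dot, dotProduct_comm]
  calc norm2 z ^ 2 = (B *ᵥ z) ⬝ᵥ e' := by rw [h1, h2]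
    _ ≤ norm2 (B *ᵥ z) * norm2 e' := dot_le _ _
    _ ≤ (C * norm2 z) * norm2 e' := by
        apply mul_le_mul_of_nonneg_right (hB z hzs) (norm2_nonneg _)
    _ = C * norm2 e' * norm2 z := by ring

end proj

section threshold

variable {n : ℕ}

/-- hard-thresholding comparison: the part of `xkv` on `S \ T` is dominated by the part
on `T \ S`. -/
lemma threshold_le (xkv : Fin n → ℝ) (S T : Finset (Fin n)) (hcard : S.card ≤ T.card)
    (hbig : ∀ i ∈ T, ∀ j ∉ T, |xkv j| ≤ |xkv i|) :
    norm2 (restrict (S \ T) xkv) ≤ norm2 (restrict (T \ S) xkv) := by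
  unfold norm2
  apply Real.sqrt_le_sqrt
  rw [restrict_sum_sq, restrict_sum_sq]
  rcases Finset.eq_empty_or_nonempty (S \ T) with hST | hST
  · rw [hST]
    simp only [Finset.sum_empty]
    exact Finset.sum_nonneg fun i _ => sq_nonneg _
  have hcards : (S \ T).card ≤ (T \ S).card := by
    have h1 := Finset.card_sdiff_add_card_inter S T
    have h2 := Finset.card_sdiff_add_card_inter T S
    rw [Finset.inter_comm] at h2
    omega
  have hTS : (T \ S).Nonempty := by
    rw [← Finset.card_pos]
    exact lt_of_lt_of_le (Finset.card_pos.2 hST) hcards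
  obtain ⟨i₀, hi₀, hmin⟩ := Finset.exists_min_image (T \ S) (fun i => |xkv i|) hTS
  have hi₀T : i₀ ∈ T := (Finset.mem_sdiff.1 hi₀).1
  calc ∑ i ∈ S \ T, xkv i ^ 2 ≤ ∑ _i ∈ S \ T, xkv i₀ ^ 2 := by
        apply Finset.sum_le_sum
        intro j hj
        have hjT : j ∉ T := (Finset.mem_sdiff.1 hj).2
        have := hbig i₀ hi₀T j hjT
        calc xkv j ^ 2 = |xkv j| ^ 2 := (sq_abs _).symm
          _ ≤ |xkv i₀| ^ 2 := by
              apply pow_le_pow_left₀ (abs_nonneg _) this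
          _ = xkv i₀ ^ 2 := sq_abs _
    _ = (S \ T).card • (xkv i₀ ^ 2) := (Finset.sum_const _)
    _ ≤ (T \ S).card • (xkv i₀ ^ 2) := by
        apply nsmul_le_nsmul_left (sq_nonneg _) hcards
    _ ≤ ∑ i ∈ T \ S, xkv i ^ 2 := by
        apply Finset.card_nsmul_le_sum
        intro j hj
        have := hmin j hj
        calc xkv i₀ ^ 2 = |xkv i₀| ^ 2 := (sq_abs _).symm
          _ ≤ |xkv j| ^ 2 := by apply pow_le_pow_left₀ (abs_nonneg _) this
          _ = xkv j ^ 2 := sq_abs _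

end threshold

end NSTaux

set_option maxHeartbeats 1000000 in
open NSTaux in
theorem stmt11 {M N : ℕ} (A : Matrix (Fin M) (Fin N) ℝ) (hA : IsUnit (A * Aᴴ).det)
    (s : ℕ) (x : Fin N → ℝ) (hx : sparse s x) (e : Fin M → ℝ) (y : Fin M → ℝ)
    (hy : y = A.mulVec x + e)
    (lam : ℝ) (hlam : 0 < lam)
    (μ xk : ℕ → Fin N → ℝ) (T : ℕ → Finset (Fin N))
    (hμ0 : μ 0 = 0)
    (hxk : ∀ k, 1 ≤ k →
      xk k = μ (k - 1) + (Aᴴ * (A * Aᴴ)⁻¹).mulVec (y - A.mulVec (μ (k - 1))))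
    (hTcard : ∀ k, 1 ≤ k → (T k).card = s)
    (hTbig : ∀ k, 1 ≤ k → ∀ i ∈ T k, ∀ j ∉ T k, |xk k j| ≤ |xk k i|)
    (hμ : ∀ k, 1 ≤ k → μ k = restrict (T k) (xk k) +
      lam⁻¹ • restrict (T k) (Aᴴ.mulVec (y - A.mulVec (restrict (T k) (xk k)))))
    (hδ : ripConst A (3 * s) < 1)
    (hγ : pripConst A (3 * s) < Real.sqrt 2 / 4)
    (hlamBig : lam > 2 * Real.sqrt 2 * pripConst A (3 * s) *
      (1 + ripConst A (3 * s)) * Real.sqrt (1 + ripConst A (3 * s)) /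
      (Real.sqrt (1 - ripConst A (3 * s)) *
        (1 - 2 * Real.sqrt 2 * pripConst A (3 * s))))
    (ρ κ : ℝ)
    (hρ : ρ = 2 * Real.sqrt 2 * pripConst A (3 * s) *
      (1 + (1 + ripConst A (3 * s)) * Real.sqrt (1 + ripConst A (3 * s)) /
        (lam * Real.sqrt (1 - ripConst A (3 * s)))))
    (hκ : κ = (1 + (1 + ripConst A (3 * s)) * Real.sqrt (1 + ripConst A (3 * s)) /
        (lam * Real.sqrt (1 - ripConst A (3 * s)))) *
      (Real.sqrt (2 + 2 * thetaConst A (3 * s)) + Real.sqrt (1 + thetaConst A (3 * s))) +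
      (1 + ripConst A (3 * s)) / (lam * Real.sqrt (1 - ripConst A (3 * s)))) :
    ∀ k, 1 ≤ k →
      norm2 (x - μ k) ≤ ρ ^ k * norm2 (x - μ 0) +
        κ * (1 - ρ ^ k) / (1 - ρ) * norm2 e := by
  classical
  set δ := ripConst A (3 * s) with hδdef
  set γ := pripConst A (3 * s) with hγdef
  set θ := thetaConst A (3 * s) with hθdef
  have hθrip : θ = ripConst ((A * Aᴴ)⁻¹ * A) (3 * s) := hθdef
  have hδ0 : 0 ≤ δ := ripConst_nonneg A (3 * s)
  have hγ0 : 0 ≤ γ := pripConst_nonneg A (3 * s)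
  have hθ0 : 0 ≤ θ := hθrip ▸ ripConst_nonneg _ (3 * s)
  have h1δ : 0 < 1 - δ := by linarith
  have hd1 : 0 < Real.sqrt (1 - δ) := Real.sqrt_pos.2 h1δ
  have hsq2 : Real.sqrt 2 * Real.sqrt 2 = 2 := Real.mul_self_sqrt (by norm_num)
  have hsq2ge : 1 ≤ Real.sqrt 2 := by nlinarith [Real.sqrt_nonneg 2, hsq2]
  have hsqδ : Real.sqrt (1 + δ) * Real.sqrt (1 + δ) = 1 + δ :=
    Real.mul_self_sqrt (by linarith)
  set c := (1 + δ) * Real.sqrt (1 + δ) / (lam * Real.sqrt (1 - δ)) with hcdef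
  have hc0 : 0 ≤ c := by
    rw [hcdef]
    apply div_nonneg (mul_nonneg (by linarith) (Real.sqrt_nonneg _))
    exact le_of_lt (mul_pos hlam hd1)
  have hρ0 : 0 ≤ ρ := by
    rw [hρ]
    apply mul_nonneg (mul_nonneg (by positivity) hγ0)
    linarith
  -- ρ < 1
  have hs2pos : (0:ℝ) < Real.sqrt 2 := by linarith
  have ha1 : 2 * Real.sqrt 2 * γ < 1 := by
    nlinarith [mul_lt_mul_of_pos_left hγ (by linarith : (0:ℝ) < 2 * Real.sqrt 2), hsq2]
  have hρ1 : ρ < 1 := by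
    have hY : 0 < Real.sqrt (1 - δ) * (1 - 2 * Real.sqrt 2 * γ) := by
      apply mul_pos hd1; linarith
    have h1 : 2 * Real.sqrt 2 * γ * (1 + δ) * Real.sqrt (1 + δ)
        < lam * (Real.sqrt (1 - δ) * (1 - 2 * Real.sqrt 2 * γ)) :=
      (div_lt_iff₀ hY).1 hlamBig
    have hL : 0 < lam * Real.sqrt (1 - δ) := mul_pos hlam hd1
    have hADL : 2 * Real.sqrt 2 * γ * c < 1 - 2 * Real.sqrt 2 * γ := by
      rw [hcdef, mul_div_assoc' _ _ (lam * Real.sqrt (1 - δ)), div_lt_iff₀ hL]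
      nlinarith
    rw [hρ]
    have : 2 * Real.sqrt 2 * γ * (1 + c) = 2 * Real.sqrt 2 * γ + 2 * Real.sqrt 2 * γ * c := by
      ring
    rw [this]
    linarith
  have h1ρ : (0:ℝ) < 1 - ρ := by linarith
  -- support of x
  set S := Finset.univ.filter (fun i => x i ≠ 0) with hSdef
  have hScard : S.card ≤ s := hx
  have hxS : ∀ i, i ∉ S → x i = 0 := by
    intro i hi
    by_contra h
    exact hi (by simp [hSdef, h])
  -- sparsity of the iterates
  have hμsp : ∀ j, sparse (2 * s) (μ j) := by
    intro j
    rcases Nat.eq_zero_or_pos j with h0 | h1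
    · subst h0
      rw [hμ0]
      unfold sparse
      simp
    · rw [hμ j h1]
      have h2 := sparse_add (sparse_restrict (T j) (xk j))
        (sparse_smul lam⁻¹ (sparse_restrict (T j) (Aᴴ.mulVec (y - A.mulVec (restrict (T j) (xk j))))))
      rw [hTcard j h1] at h2
      rw [two_mul]
      exact h2
  -- ================= one-step estimate =================
  have onestep : ∀ k, 1 ≤ k →
      norm2 (x - μ k) ≤ ρ * norm2 (x - μ (k - 1)) + κ * norm2 e := by
    intro k hk
    set u := x - μ (k - 1) with hu
    set Tk := T k with hTkdef
    set Ω := S ∪ Tk with hΩdef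
    set v := x - xk k with hv
    set w := x - restrict Tk (xk k) with hw
    have hTkcard : Tk.card = s := hTcard k hk
    have hΩcard : Ω.card ≤ 3 * s := by
      rw [hΩdef]
      have := Finset.card_union_le S Tk
      omega
    have hTk3 : Tk.card ≤ 3 * s := by omega
    have husp : sparse (3 * s) u := by
      have h2 := sparse_sub hx (hμsp (k - 1))
      have h3 : s + 2 * s = 3 * s := by ring
      rw [h3] at h2
      exact h2
    have hwsp : sparse (3 * s) w := by
      have h2 := sparse_sub hx (sparse_restrict Tk (xk k))
      rw [hTkcard] at h2
      exact sparse_mono (by omega) h2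
    -- identity 1 : v = (u - Pu) - A†e
    have hid1 : v = (u - Pm A *ᵥ u) - (Aᴴ * (A * Aᴴ)⁻¹) *ᵥ e := by
      rw [hv, hxk k hk, hy]
      have h1 : A.mulVec x + e - A.mulVec (μ (k - 1)) = A.mulVec u + e := by
        rw [hu, Matrix.mulVec_sub]
        abel
      rw [h1, Matrix.mulVec_add, Matrix.mulVec_mulVec]
      have h2 : (Aᴴ * (A * Aᴴ)⁻¹ * A) = Pm A := rfl
      rw [h2, hu]
      abel
    -- bound on the restricted v
    have hnv : norm2 (restrict Ω v) ≤ γ * norm2 u + Real.sqrt (1 + θ) * norm2 e := by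
      have hsplit : restrict Ω v
          = restrict Ω (u - Pm A *ᵥ u) - restrict Ω ((Aᴴ * (A * Aᴴ)⁻¹) *ᵥ e) := by
        rw [hid1, restrict_sub]
      rw [hsplit]
      have h1 : norm2 (restrict Ω (u - Pm A *ᵥ u)) ≤ γ * norm2 u :=
        est_resid A hA husp Ω hΩcard
      have h2 : norm2 (restrict Ω ((Aᴴ * (A * Aᴴ)⁻¹) *ᵥ e)) ≤ Real.sqrt (1 + θ) * norm2 e := by
        have hBT : ((A * Aᴴ)⁻¹ * A)ᵀ = Aᴴ * (A * Aᴴ)⁻¹ := by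
          rw [Matrix.transpose_mul, W_symm, conj_eq]
        rw [← hBT, hθrip]
        apply est_T ((A * Aᴴ)⁻¹ * A) (Real.sqrt_nonneg _) _ e Ω hΩcard
        intro z hz
        exact mulVec_rip_bound _ hz
      calc norm2 (restrict Ω (u - Pm A *ᵥ u) - restrict Ω ((Aᴴ * (A * Aᴴ)⁻¹) *ᵥ e))
          ≤ norm2 (restrict Ω (u - Pm A *ᵥ u)) + norm2 (restrict Ω ((Aᴴ * (A * Aᴴ)⁻¹) *ᵥ e)) :=
            norm2_sub_le _ _
        _ ≤ γ * norm2 u + Real.sqrt (1 + θ) * norm2 e := add_le_add h1 h2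
    -- thresholding : ‖w‖ ≤ 2 ‖v_Ω‖
    have hw2 : norm2 w ≤ 2 * norm2 (restrict Ω v) := by
      have hdecomp : w = restrict Ω v + restrict (S \ Tk) (xk k) := by
        funext i
        rw [hw, hv]
        by_cases hiT : i ∈ Tk
        · have hiΩ : i ∈ Ω := by rw [hΩdef]; exact Finset.mem_union_right _ hiT
          have hiST : i ∉ S \ Tk := by simp [Finset.mem_sdiff, hiT]
          simp [restrict, hiT, hiΩ, hiST]
        · by_cases hiS : i ∈ S
          · have hiΩ : i ∈ Ω := by rw [hΩdef]; exact Finset.mem_union_left _ hiS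
            have hiST : i ∈ S \ Tk := Finset.mem_sdiff.2 ⟨hiS, hiT⟩
            simp only [Pi.sub_apply, Pi.add_apply, restrict, if_pos hiΩ, if_pos hiST,
              if_neg hiT]
            ring
          · have hiΩ : i ∉ Ω := by
              rw [hΩdef]
              simp [Finset.mem_union, hiS, hiT]
            have hiST : i ∉ S \ Tk := by simp [Finset.mem_sdiff, hiS]
            simp only [Pi.sub_apply, Pi.add_apply, restrict, if_neg hiΩ, if_neg hiST,
              if_neg hiT]
            rw [hxS i hiS]
            ring
      have hstep1 : norm2 w ≤ norm2 (restrict Ω v) + norm2 (restrict (S \ Tk) (xk k)) := by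
        rw [hdecomp]
        exact norm2_add_le _ _
      have hth : norm2 (restrict (S \ Tk) (xk k)) ≤ norm2 (restrict (Tk \ S) (xk k)) :=
        threshold_le (xk k) S Tk (hScard.trans_eq hTkcard.symm) (hTbig k hk)
      have heq : norm2 (restrict (Tk \ S) (xk k)) = norm2 (restrict (Tk \ S) v) := by
        unfold norm2
        congr 1
        rw [restrict_sum_sq, restrict_sum_sq]
        apply Finset.sum_congr rfl
        intro i hi
        have hiS : i ∉ S := (Finset.mem_sdiff.1 hi).2
        rw [hv]
        simp only [Pi.sub_apply]
        rw [hxS i hiS]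
        ring
      have hmono : norm2 (restrict (Tk \ S) v) ≤ norm2 (restrict Ω v) := by
        apply norm2_restrict_mono
        intro i hi
        rw [hΩdef]
        exact Finset.mem_union_right _ (Finset.mem_sdiff.1 hi).1
      linarith
    -- identity 3 and the feedback bound
    have hid3 : x - μ k
        = w - lam⁻¹ • (restrict Tk (Aᴴ *ᵥ (A *ᵥ w)) + restrict Tk (Aᴴ *ᵥ e)) := by
      rw [hμ k hk]
      have h1 : y - A.mulVec (restrict Tk (xk k)) = A.mulVec w + e := by
        rw [hy, hw, Matrix.mulVec_sub]
        abel
      rw [h1, Matrix.mulVec_add, restrict_add, sub_add_eq_sub_sub, ← hw]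
    have hb1 : norm2 (restrict Tk (Aᴴ *ᵥ (A *ᵥ w))) ≤ (1 + δ) * norm2 w := by
      rw [conj_eq]
      have hAe : norm2 (restrict Tk (Aᵀ *ᵥ (A *ᵥ w))) ≤ Real.sqrt (1 + δ) * norm2 (A *ᵥ w) :=
        est_T A (Real.sqrt_nonneg _) (fun z hz => mulVec_rip_bound A hz) (A *ᵥ w) Tk hTk3
      have hAw : norm2 (A *ᵥ w) ≤ Real.sqrt (1 + δ) * norm2 w := mulVec_rip_bound A hwsp
      calc norm2 (restrict Tk (Aᵀ *ᵥ (A *ᵥ w))) ≤ Real.sqrt (1 + δ) * norm2 (A *ᵥ w) := hAe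
        _ ≤ Real.sqrt (1 + δ) * (Real.sqrt (1 + δ) * norm2 w) :=
            mul_le_mul_of_nonneg_left hAw (Real.sqrt_nonneg _)
        _ = (1 + δ) * norm2 w := by rw [← mul_assoc, hsqδ]
    have hb2 : norm2 (restrict Tk (Aᴴ *ᵥ e)) ≤ Real.sqrt (1 + δ) * norm2 e := by
      rw [conj_eq]
      exact est_T A (Real.sqrt_nonneg _) (fun z hz => mulVec_rip_bound A hz) e Tk hTk3
    have hinv0 : (0:ℝ) ≤ lam⁻¹ := le_of_lt (inv_pos.2 hlam)
    have hn3 : norm2 (x - μ k)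
        ≤ (1 + lam⁻¹ * (1 + δ)) * norm2 w + lam⁻¹ * Real.sqrt (1 + δ) * norm2 e := by
      rw [hid3]
      have t1 := norm2_sub_le w
        (lam⁻¹ • (restrict Tk (Aᴴ *ᵥ (A *ᵥ w)) + restrict Tk (Aᴴ *ᵥ e)))
      have t2 : norm2 (lam⁻¹ • (restrict Tk (Aᴴ *ᵥ (A *ᵥ w)) + restrict Tk (Aᴴ *ᵥ e)))
          = lam⁻¹ * norm2 (restrict Tk (Aᴴ *ᵥ (A *ᵥ w)) + restrict Tk (Aᴴ *ᵥ e)) := by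
        rw [norm2_smul, abs_of_pos (inv_pos.2 hlam)]
      have t3 := norm2_add_le (restrict Tk (Aᴴ *ᵥ (A *ᵥ w))) (restrict Tk (Aᴴ *ᵥ e))
      have t4 : lam⁻¹ * norm2 (restrict Tk (Aᴴ *ᵥ (A *ᵥ w)) + restrict Tk (Aᴴ *ᵥ e))
          ≤ lam⁻¹ * ((1 + δ) * norm2 w + Real.sqrt (1 + δ) * norm2 e) := by
        apply mul_le_mul_of_nonneg_left _ hinv0
        linarith
      rw [t2] at t1
      have t5 : lam⁻¹ * ((1 + δ) * norm2 w + Real.sqrt (1 + δ) * norm2 e)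
          = lam⁻¹ * (1 + δ) * norm2 w + lam⁻¹ * Real.sqrt (1 + δ) * norm2 e := by ring
      have t6 : (1 + lam⁻¹ * (1 + δ)) * norm2 w
          = norm2 w + lam⁻¹ * (1 + δ) * norm2 w := by ring
      linarith
    -- coefficient comparisons
    have hK1 : lam⁻¹ * (1 + δ) ≤ c := by
      rw [hcdef]
      rw [inv_mul_eq_div, div_le_div_iff₀ hlam (mul_pos hlam hd1)]
      have hmono : Real.sqrt (1 - δ) ≤ Real.sqrt (1 + δ) := Real.sqrt_le_sqrt (by linarith)
      have q : 0 ≤ (1 + δ) * lam * (Real.sqrt (1 + δ) - Real.sqrt (1 - δ)) :=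
        mul_nonneg (mul_nonneg (by linarith) hlam.le) (by linarith)
      nlinarith [q]
    have hK2 : lam⁻¹ * Real.sqrt (1 + δ) ≤ (1 + δ) / (lam * Real.sqrt (1 - δ)) := by
      rw [inv_mul_eq_div, div_le_div_iff₀ hlam (mul_pos hlam hd1)]
      have hmono : Real.sqrt (1 - δ) ≤ Real.sqrt (1 + δ) := Real.sqrt_le_sqrt (by linarith)
      have q : 0 ≤ Real.sqrt (1 + δ) * lam * (Real.sqrt (1 + δ) - Real.sqrt (1 - δ)) :=
        mul_nonneg (mul_nonneg (Real.sqrt_nonneg _) hlam.le) (by linarith)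
      nlinarith [q, hsqδ]
    have hK3 : Real.sqrt (1 + θ) ≤ Real.sqrt (2 + 2 * θ) := Real.sqrt_le_sqrt (by linarith)
    have hnw0 := norm2_nonneg w
    have hnu0 := norm2_nonneg u
    have hne0 := norm2_nonneg e
    have hnv0 := norm2_nonneg (restrict Ω v)
    have hsθ0 := Real.sqrt_nonneg (1 + θ)
    -- assemble
    have step1 : norm2 (x - μ k)
        ≤ (1 + c) * norm2 w + (1 + δ) / (lam * Real.sqrt (1 - δ)) * norm2 e := by
      have e1 : (1 + lam⁻¹ * (1 + δ)) * norm2 w ≤ (1 + c) * norm2 w :=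
        mul_le_mul_of_nonneg_right (by linarith) hnw0
      have e2 : lam⁻¹ * Real.sqrt (1 + δ) * norm2 e
          ≤ (1 + δ) / (lam * Real.sqrt (1 - δ)) * norm2 e :=
        mul_le_mul_of_nonneg_right hK2 hne0
      linarith
    have step2 : norm2 w ≤ 2 * γ * norm2 u + 2 * Real.sqrt (1 + θ) * norm2 e := by
      linarith
    have step3 : norm2 (x - μ k)
        ≤ (1 + c) * (2 * γ * norm2 u + 2 * Real.sqrt (1 + θ) * norm2 e)
          + (1 + δ) / (lam * Real.sqrt (1 - δ)) * norm2 e := by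
      have := mul_le_mul_of_nonneg_left step2 (by linarith : (0:ℝ) ≤ 1 + c)
      linarith
    have coefu : (1 + c) * (2 * γ) ≤ 2 * Real.sqrt 2 * γ * (1 + c) := by
      have q1 : 0 ≤ γ * (Real.sqrt 2 - 1) := mul_nonneg hγ0 (by linarith)
      have q2 : 0 ≤ γ * (Real.sqrt 2 - 1) * c := mul_nonneg q1 hc0
      nlinarith [q1, q2]
    have coefe : (1 + c) * (2 * Real.sqrt (1 + θ))
        ≤ (1 + c) * (Real.sqrt (2 + 2 * θ) + Real.sqrt (1 + θ)) := by
      apply mul_le_mul_of_nonneg_left _ (by linarith : (0:ℝ) ≤ 1 + c)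
      linarith
    rw [hρ, hκ]
    have expand : (1 + c) * (2 * γ * norm2 u + 2 * Real.sqrt (1 + θ) * norm2 e)
        = ((1 + c) * (2 * γ)) * norm2 u + ((1 + c) * (2 * Real.sqrt (1 + θ))) * norm2 e := by
      ring
    rw [expand] at step3
    have f1 : ((1 + c) * (2 * γ)) * norm2 u ≤ (2 * Real.sqrt 2 * γ * (1 + c)) * norm2 u :=
      mul_le_mul_of_nonneg_right coefu hnu0
    have f2 : ((1 + c) * (2 * Real.sqrt (1 + θ))) * norm2 e
        ≤ ((1 + c) * (Real.sqrt (2 + 2 * θ) + Real.sqrt (1 + θ))) * norm2 e :=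
      mul_le_mul_of_nonneg_right coefe hne0
    calc norm2 (x - μ k)
        ≤ (2 * Real.sqrt 2 * γ * (1 + c)) * norm2 u
          + (((1 + c) * (Real.sqrt (2 + 2 * θ) + Real.sqrt (1 + θ)))
            + (1 + δ) / (lam * Real.sqrt (1 - δ))) * norm2 e := by
          have : (((1 + c) * (Real.sqrt (2 + 2 * θ) + Real.sqrt (1 + θ)))
              + (1 + δ) / (lam * Real.sqrt (1 - δ))) * norm2 e
              = ((1 + c) * (Real.sqrt (2 + 2 * θ) + Real.sqrt (1 + θ))) * norm2 e
                + (1 + δ) / (lam * Real.sqrt (1 - δ)) * norm2 e := by ring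
          rw [this]
          linarith
      _ = 2 * Real.sqrt 2 * γ * (1 + c) * norm2 (x - μ (k - 1))
          + ((1 + c) * (Real.sqrt (2 + 2 * θ) + Real.sqrt (1 + θ))
            + (1 + δ) / (lam * Real.sqrt (1 - δ))) * norm2 e := by rw [← hu]
  -- ================= induction =================
  intro k hk
  induction k, hk using Nat.le_induction with
  | base =>
      have h1 := onestep 1 le_rfl
      norm_num at h1 ⊢
      have hcalc : κ * (1 - ρ) / (1 - ρ) = κ := by
        field_simp
      calc norm2 (x - μ 1) ≤ ρ * norm2 (x - μ 0) + κ * norm2 e := h1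
        _ = ρ * norm2 (x - μ 0) + κ * (1 - ρ) / (1 - ρ) * norm2 e := by rw [hcalc]
  | succ k hk1 ih =>
      have h1 := onestep (k + 1) (by omega)
      rw [Nat.add_sub_cancel] at h1
      have h2 : ρ * norm2 (x - μ k)
          ≤ ρ * (ρ ^ k * norm2 (x - μ 0) + κ * (1 - ρ ^ k) / (1 - ρ) * norm2 e) :=
        mul_le_mul_of_nonneg_left ih hρ0
      have halg : ρ * (ρ ^ k * norm2 (x - μ 0) + κ * (1 - ρ ^ k) / (1 - ρ) * norm2 e)
          + κ * norm2 e
          = ρ ^ (k + 1) * norm2 (x - μ 0) + κ * (1 - ρ ^ (k + 1)) / (1 - ρ) * norm2 e := by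
        have hne : (1:ℝ) - ρ ≠ 0 := ne_of_gt h1ρ
        field_simp
        ring
      linarith
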